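/- The map Γ: h₂(ℍ) → End(ℍ² ⊕ ℍ²) defined by Γ(A)(ψ, φ) = (Ã φ, A ψ) satisfies the Clifford relation Γ(A)² = g(A,A)·1, where g(A,A) = -det₀(A). -/

import Mathlib

open Matrix

/-- The 2×2 hermitian quaternionic matrix `(t+x, y; y*, t-x)`. -/
noncomputable def qherm (t x : ℝ) (y : Quaternion ℝ) : Matrix (Fin 2) (Fin 2) (Quaternion ℝ) :=
  !![((t + x : ℝ) : Quaternion ℝ), y; star y, ((t - x : ℝ) : Quaternion ℝ)]

/-- Trace reversal `Ã = A - (tr A)·1`. -/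
noncomputable def qtilde (M : Matrix (Fin 2) (Fin 2) (Quaternion ℝ)) :
    Matrix (Fin 2) (Fin 2) (Quaternion ℝ) :=
  M - (Matrix.trace M) • (1 : Matrix (Fin 2) (Fin 2) (Quaternion ℝ))

/-- The map `Γ(A)(ψ, φ) = (Ã φ, A ψ)` on `ℍ² ⊕ ℍ²` satisfies the Clifford relation
`Γ(A)² = g(A,A)·1` with `g(A,A) = -det₀(A)`: explicitly, `Ã (A ψ) = g(A,A) ψ` and
`A (Ã φ) = g(A,A) φ`. -/
theorem clifford_relation_dim6 (t x : ℝ) (y : Quaternion ℝ) (ψ φ : Fin 2 → Quaternion ℝ) :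
    qtilde (qherm t x y) *ᵥ (qherm t x y *ᵥ ψ) =
      (-(t ^ 2 - x ^ 2 - (y * star y).re)) • ψ ∧
    qherm t x y *ᵥ (qtilde (qherm t x y) *ᵥ φ) =
      (-(t ^ 2 - x ^ 2 - (y * star y).re)) • φ := by
  obtain ⟨r, hr, hre⟩ : ∃ r : ℝ, y * star y = (r : Quaternion ℝ) ∧ (y * star y).re = r :=
    ⟨Quaternion.normSq y, Quaternion.self_mul_star y, by
      rw [Quaternion.self_mul_star]; simp⟩
  have hsr : star y * y = (r : Quaternion ℝ) := by
    rw [Quaternion.star_mul_self, ← hr, Quaternion.self_mul_star]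
  rw [hre]
  set c : ℝ := -(t ^ 2 - x ^ 2 - r) with hc
  have h0 : qtilde (qherm t x y) =
      !![((x - t : ℝ) : Quaternion ℝ), y; star y, ((-t - x : ℝ) : Quaternion ℝ)] := by
    refine Matrix.ext fun i j => ?_
    fin_cases i <;> fin_cases j <;>
      simp [qherm, qtilde, Matrix.trace, Matrix.diag, Fin.sum_univ_two, Matrix.one_apply] <;>
      push_cast <;> abel
  have hone : ((c : Quaternion ℝ)) • (1 : Matrix (Fin 2) (Fin 2) (Quaternion ℝ)) =
      !![(c : Quaternion ℝ), 0; 0, (c : Quaternion ℝ)] := by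
    rw [Matrix.one_fin_two]
    simp
  have h1 : qtilde (qherm t x y) * qherm t x y = (c : Quaternion ℝ) • 1 := by
    rw [h0, qherm, Matrix.mul_fin_two, hone]
    refine Matrix.ext fun i j => ?_
    fin_cases i <;> fin_cases j <;>
      simp only [Fin.mk_zero, Fin.mk_one, Fin.isValue, Matrix.of_apply, Matrix.cons_val',
        Matrix.cons_val_zero, Matrix.cons_val_one, Matrix.head_cons, Matrix.empty_val',
        Matrix.cons_val_fin_one, Matrix.head_fin_const]
    · rw [hr, ← Quaternion.coe_mul, ← Quaternion.coe_add]
      norm_cast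
      rw [hc]; congr 1; ring
    · rw [← Quaternion.coe_commutes (t - x : ℝ) y, ← add_mul, ← Quaternion.coe_add]
      norm_num
    · rw [← Quaternion.coe_commutes (t + x : ℝ) (star y), ← add_mul, ← Quaternion.coe_add]
      norm_num
    · rw [hsr, ← Quaternion.coe_mul, ← Quaternion.coe_add]
      norm_cast
      rw [hc]; congr 1; ring
  have h2 : qherm t x y * qtilde (qherm t x y) = (c : Quaternion ℝ) • 1 := by
    rw [h0, qherm, Matrix.mul_fin_two, hone]
    refine Matrix.ext fun i j => ?_
    fin_cases i <;> fin_cases j <;>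
      simp only [Fin.mk_zero, Fin.mk_one, Fin.isValue, Matrix.of_apply, Matrix.cons_val',
        Matrix.cons_val_zero, Matrix.cons_val_one, Matrix.head_cons, Matrix.empty_val',
        Matrix.cons_val_fin_one, Matrix.head_fin_const]
    · rw [hr, ← Quaternion.coe_mul, ← Quaternion.coe_add]
      norm_cast
      rw [hc]; congr 1; ring
    · rw [← Quaternion.coe_commutes (-t - x : ℝ) y, ← add_mul, ← Quaternion.coe_add]
      norm_num
    · rw [← Quaternion.coe_commutes (x - t : ℝ) (star y), ← add_mul, ← Quaternion.coe_add]
      norm_num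
    · rw [hsr, ← Quaternion.coe_mul, ← Quaternion.coe_add]
      norm_cast
      rw [hc]; congr 1; ring
  have hfin : ∀ v : Fin 2 → Quaternion ℝ,
      ((c : Quaternion ℝ) • (1 : Matrix (Fin 2) (Fin 2) (Quaternion ℝ))) *ᵥ v = c • v := by
    intro v
    rw [Matrix.smul_mulVec, Matrix.one_mulVec]
    funext i
    simp [Quaternion.coe_mul_eq_smul]
  exact ⟨by rw [mulVec_mulVec, h1, hfin], by rw [mulVec_mulVec, h2, hfin]⟩
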